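/- arXiv:2310.00864 — 3 statements merged into one kernel-verified Lean document; each statement's English description precedes it below -/
import Mathlib

section
/- Let K ≥ 1 be an integer, w : {−1,1}^K → ℝ, and z ∈ ℝ^K with z_k ≠ 0 for all k. Let a* be the unique element of {−1,1}^K with a*_k z_k > 0 for all k. Then Σ_{a ∈ {−1,1}^K} w(a) ψ(a ⊙ z) = Σ_{a ∈ {−1,1}^K} w(a) + w(a*)·(ψ(a* ⊙ z) − 1). -/
/-- `Tgen s z = max (s - z 1, ..., s - z K, 0)`, the function `T_s` from the paper. -/
noncomputable def Tgen {K : ℕ} (s : ℝ) (z : Fin K → ℝ) : ℝ :=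
  Finset.fold (· ⊔ ·) 0 (fun k => s - z k) Finset.univ

/-- The generalized ψ-loss: `ψ z = T₁ z - T₀ z`. -/
noncomputable def psiLoss {K : ℕ} (z : Fin K → ℝ) : ℝ :=
  Tgen 1 z - Tgen 0 z

open scoped Classical in
/-- The set of sign vectors `{-1, 1}^K`, as a finset of `Fin K → ℝ`. -/
noncomputable def signVecs (K : ℕ) : Finset (Fin K → ℝ) :=
  Finset.image (fun (b : Fin K → Bool) (k : Fin K) => if b k then (1 : ℝ) else -1)
    Finset.univ

lemma mem_signVecs {K : ℕ} (a : Fin K → ℝ) :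
    a ∈ signVecs K ↔ ∀ k, a k = 1 ∨ a k = -1 := by
  classical
  unfold signVecs
  constructor
  · intro h k
    rw [Finset.mem_image] at h
    obtain ⟨b, -, rfl⟩ := h
    by_cases hb : b k <;> simp [hb]
  · intro h
    rw [Finset.mem_image]
    refine ⟨fun k => decide (a k = 1), Finset.mem_univ _, ?_⟩
    funext k
    rcases h k with h1 | h1 <;> norm_num [h1]

lemma signVecs_nonempty (K : ℕ) : (signVecs K).Nonempty :=
  ⟨fun _ => 1, (mem_signVecs _).mpr fun _ => Or.inl rfl⟩

lemma fold_sup_eq {α : Type*} {s : Finset α} (h : s.Nonempty)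
    (f : α → ℝ) (b : ℝ) :
    Finset.fold (fun (x y : ℝ) => x ⊔ y) b f s = s.sup' h f ⊔ b := by
  induction h using Finset.Nonempty.cons_induction with
  | singleton a => simp
  | cons a s ha hs ih =>
      rw [Finset.fold_cons, ih, Finset.sup'_cons, sup_assoc]

lemma Tgen_eq {K : ℕ} (hK : 1 ≤ K) (s : ℝ) (z : Fin K → ℝ) :
    Tgen s z = (s - Finset.univ.inf' (Finset.univ_nonempty_iff.mpr ⟨⟨0, hK⟩⟩) z) ⊔ 0 := by
  have hne : (Finset.univ : Finset (Fin K)).Nonempty :=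
    Finset.univ_nonempty_iff.mpr ⟨⟨0, hK⟩⟩
  rw [Tgen, fold_sup_eq hne]
  congr 1
  apply le_antisymm
  · exact Finset.sup'_le _ _ fun k _ => by
      have := Finset.inf'_le z (Finset.mem_univ k)
      linarith
  · obtain ⟨k, -, hk⟩ := Finset.exists_mem_eq_inf' hne z
    rw [hk]
    exact Finset.le_sup' (fun j => s - z j) (Finset.mem_univ k)

lemma psiLoss_of_neg {K : ℕ} (hK : 1 ≤ K) (z : Fin K → ℝ) (k0 : Fin K)
    (h : z k0 < 0) : psiLoss z = 1 := by
  have hne : (Finset.univ : Finset (Fin K)).Nonempty :=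
    Finset.univ_nonempty_iff.mpr ⟨⟨0, hK⟩⟩
  set m := Finset.univ.inf' hne z with hm
  have hmle : m ≤ z k0 := Finset.inf'_le z (Finset.mem_univ k0)
  have hm0 : m < 0 := lt_of_le_of_lt hmle h
  rw [psiLoss, Tgen_eq hK, Tgen_eq hK, ← hm]
  rw [sup_eq_left.mpr (by linarith), sup_eq_left.mpr (by linarith)]
  ring

theorem stmt8 (K : ℕ) (hK : 1 ≤ K) (w : (Fin K → ℝ) → ℝ) (z : Fin K → ℝ)
    (hz : ∀ k, z k ≠ 0) (astar : Fin K → ℝ) (hmem : astar ∈ signVecs K)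
    (hstar : ∀ k, 0 < astar k * z k) :
    ∑ a ∈ signVecs K, w a * psiLoss (fun k => a k * z k)
      = (∑ a ∈ signVecs K, w a)
        + w astar * (psiLoss (fun k => astar k * z k) - 1) := by
  classical
  have key : ∀ a ∈ signVecs K, a ≠ astar → psiLoss (fun k => a k * z k) = 1 := by
    intro a ha hne
    have : ∃ k, a k ≠ astar k := by
      by_contra hc
      push_neg at hc
      exact hne (funext hc)
    obtain ⟨k, hk⟩ := this
    have ha1 := (mem_signVecs a).mp ha k
    have hb1 := (mem_signVecs astar).mp hmem k
    have hak : a k = -astar k := by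
      rcases ha1 with h1 | h1 <;> rcases hb1 with h2 | h2 <;> simp_all
    have hneg : a k * z k < 0 := by
      rw [hak]
      have := hstar k
      linarith
    exact psiLoss_of_neg hK _ k hneg
  rw [← Finset.sum_erase_add _ _ hmem, ← Finset.sum_erase_add _ (fun a => w a) hmem]
  have hsum : ∑ a ∈ (signVecs K).erase astar, w a * psiLoss (fun k => a k * z k)
      = ∑ a ∈ (signVecs K).erase astar, w a := by
    apply Finset.sum_congr rfl
    intro x hx
    rw [key x (Finset.mem_of_mem_erase hx) (Finset.ne_of_mem_erase hx), mul_one]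
  rw [hsum]
  ring
end

section
/- (Pointwise Fisher consistency of the generalized ψ-loss.) Let K ≥ 1 be an integer and w : {−1,1}^K → ℝ, and define C_w(z) = Σ_{a ∈ {−1,1}^K} w(a) ψ(a ⊙ z) for z ∈ ℝ^K. Suppose w attains its maximum at a unique a₀ ∈ {−1,1}^K and w(a₀) > 0. Then every z ∈ ℝ^K attaining the minimum of C_w satisfies (a₀)_k z_k ≥ 1 for all k = 1, …, K; in particular, the sign of z_k equals (a₀)_k for every k. -/
/- ### Auxiliary lemmas -/

lemma Tgen_eq_fold_max {K : ℕ} (s : ℝ) (v : Fin K → ℝ) :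
    Tgen s v = Finset.fold max 0 (fun k => s - v k) Finset.univ := rfl

lemma Tgen_le {K : ℕ} {s c : ℝ} (v : Fin K → ℝ) (h0 : (0:ℝ) ≤ c)
    (h : ∀ k, s - v k ≤ c) : Tgen s v ≤ c := by
  rw [Tgen_eq_fold_max, Finset.fold_max_le]; exact ⟨h0, fun k _ => h k⟩

lemma Tgen_nonneg {K : ℕ} (s : ℝ) (v : Fin K → ℝ) : 0 ≤ Tgen s v := by
  rw [Tgen_eq_fold_max, Finset.le_fold_max]; exact Or.inl le_rfl

lemma le_Tgen {K : ℕ} (s : ℝ) (v : Fin K → ℝ) (k : Fin K) : s - v k ≤ Tgen s v := by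
  rw [Tgen_eq_fold_max, Finset.le_fold_max]
  exact Or.inr ⟨k, Finset.mem_univ k, le_rfl⟩

lemma psi_nonneg {K : ℕ} (v : Fin K → ℝ) : 0 ≤ psiLoss v := by
  have h : Tgen 0 v ≤ Tgen 1 v := by
    refine Tgen_le v (Tgen_nonneg 1 v) fun k => ?_
    have := le_Tgen 1 v k; linarith
  simpa [psiLoss] using h

lemma psi_le_one {K : ℕ} (v : Fin K → ℝ) : psiLoss v ≤ 1 := by
  have h : Tgen 1 v ≤ Tgen 0 v + 1 := by
    refine Tgen_le v (by linarith [Tgen_nonneg 0 v]) fun k => ?_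
    have := le_Tgen 0 v k; linarith
  simp only [psiLoss]; linarith

lemma psi_eq_zero {K : ℕ} {v : Fin K → ℝ} (h : ∀ k, 1 ≤ v k) : psiLoss v = 0 := by
  have h1 : Tgen 1 v = 0 :=
    le_antisymm (Tgen_le v le_rfl fun k => by linarith [h k]) (Tgen_nonneg 1 v)
  have h0 : Tgen 0 v = 0 :=
    le_antisymm (Tgen_le v le_rfl fun k => by linarith [h k]) (Tgen_nonneg 0 v)
  simp [psiLoss, h0, h1]

lemma psi_eq_one {K : ℕ} {v : Fin K → ℝ} (h : ∃ k, v k ≤ 0) : psiLoss v = 1 := by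
  obtain ⟨k, hk⟩ := h
  have hT1 : (1:ℝ) ≤ Tgen 1 v := le_trans (by linarith) (le_Tgen 1 v k)
  have h2 : Tgen 0 v ≤ Tgen 1 v - 1 := by
    refine Tgen_le v (by linarith) fun j => ?_
    have := le_Tgen 1 v j; linarith
  have h3 : Tgen 1 v ≤ Tgen 0 v + 1 := by
    refine Tgen_le v (by linarith [Tgen_nonneg 0 v]) fun j => ?_
    have := le_Tgen 0 v j; linarith
  simp only [psiLoss]; linarith

lemma psi_pos {K : ℕ} {v : Fin K → ℝ} (h : ∃ k, v k < 1) : 0 < psiLoss v := by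
  obtain ⟨k, hk⟩ := h
  have hT1 : 0 < Tgen 1 v := lt_of_lt_of_le (by linarith) (le_Tgen 1 v k)
  have h2 : Tgen 0 v ≤ max 0 (Tgen 1 v - 1) := by
    refine Tgen_le v (le_max_left _ _) fun j => ?_
    have := le_Tgen 1 v j
    exact le_max_of_le_right (by linarith)
  have h3 : max 0 (Tgen 1 v - 1) < Tgen 1 v := max_lt hT1 (by linarith)
  simp only [psiLoss]; linarith

lemma sign_eq_of_pos_mul {x y t : ℝ} (hx : x = 1 ∨ x = -1) (hy : y = 1 ∨ y = -1)
    (h1 : 0 < x * t) (h2 : 0 < y * t) : x = y := by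
  rcases hx with rfl | rfl <;> rcases hy with rfl | rfl <;> [skip; skip; skip; skip] <;>
    first
      | rfl
      | (exfalso; nlinarith)

lemma eq_of_pm_mul_pos {x y : ℝ} (hx : x = 1 ∨ x = -1) (hy : y = 1 ∨ y = -1)
    (h : 0 < x * y) : x = y := by
  rcases hx with rfl | rfl <;> rcases hy with rfl | rfl <;> first | rfl | norm_num at h

theorem stmt12 (K : ℕ) (hK : 1 ≤ K) (w : (Fin K → ℝ) → ℝ) (a₀ : Fin K → ℝ)
    (ha₀ : a₀ ∈ signVecs K)
    (hmax : ∀ a ∈ signVecs K, a ≠ a₀ → w a < w a₀)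
    (hpos : 0 < w a₀) (z : Fin K → ℝ)
    (hmin : ∀ y : Fin K → ℝ,
      ∑ a ∈ signVecs K, w a * psiLoss (fun k => a k * z k)
        ≤ ∑ a ∈ signVecs K, w a * psiLoss (fun k => a k * y k)) :
    (∀ k, 1 ≤ a₀ k * z k) ∧ ∀ k, Real.sign (z k) = a₀ k := by
  classical
  have ha₀' := (mem_signVecs a₀).mp ha₀
  set S := signVecs K with hS
  -- Value of the objective at y = a₀
  have hRHS : ∑ a ∈ S, w a * psiLoss (fun k => a k * a₀ k) = ∑ a ∈ S.erase a₀, w a := by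
    rw [← Finset.add_sum_erase _ _ ha₀]
    have h1 : psiLoss (fun k => a₀ k * a₀ k) = 0 := by
      refine psi_eq_zero fun k => ?_
      rcases ha₀' k with h | h <;> rw [h] <;> norm_num
    rw [h1, mul_zero, zero_add]
    refine Finset.sum_congr rfl fun a ha => ?_
    obtain ⟨hne, haS⟩ := Finset.mem_erase.mp ha
    have ha' := (mem_signVecs a).mp haS
    have h2 : psiLoss (fun k => a k * a₀ k) = 1 := by
      refine psi_eq_one ?_
      by_contra hc
      push_neg at hc
      exact hne (funext fun k => eq_of_pm_mul_pos (ha' k) (ha₀' k) (hc k))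
    rw [h2, mul_one]
  have hmin' : ∑ a ∈ S, w a * psiLoss (fun k => a k * z k) ≤ ∑ a ∈ S.erase a₀, w a := by
    rw [← hRHS]; exact hmin a₀
  -- split off the a₀ term
  have hsplit : ∑ a ∈ S, w a * psiLoss (fun k => a k * z k)
      = w a₀ * psiLoss (fun k => a₀ k * z k)
        + ∑ a ∈ S.erase a₀, w a * psiLoss (fun k => a k * z k) :=
    (Finset.add_sum_erase S _ ha₀).symm
  -- termwise comparison
  have hterm : ∀ a ∈ S.erase a₀,
      w a₀ * (psiLoss (fun k => a k * z k) - 1) ≤ w a * (psiLoss (fun k => a k * z k) - 1) := by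
    intro a ha
    obtain ⟨hne, haS⟩ := Finset.mem_erase.mp ha
    exact mul_le_mul_of_nonpos_right (hmax a haS hne).le
      (by linarith [psi_le_one (fun k => a k * z k)])
  have hE1 : ∑ a ∈ S.erase a₀, w a₀ * (psiLoss (fun k => a k * z k) - 1)
      ≤ ∑ a ∈ S.erase a₀, w a * (psiLoss (fun k => a k * z k) - 1) :=
    Finset.sum_le_sum hterm
  -- key inequality 1 (from minimality)
  have hkey1 : w a₀ * psiLoss (fun k => a₀ k * z k)
      + ∑ a ∈ S.erase a₀, w a * (psiLoss (fun k => a k * z k) - 1) ≤ 0 := by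
    have hdist : ∑ a ∈ S.erase a₀, w a * psiLoss (fun k => a k * z k)
        = ∑ a ∈ S.erase a₀, w a * (psiLoss (fun k => a k * z k) - 1)
          + ∑ a ∈ S.erase a₀, w a := by
      rw [← Finset.sum_add_distrib]
      exact Finset.sum_congr rfl fun a _ => by ring
    linarith [hmin', hsplit, hdist]
  -- at most one sign vector agrees with z in every coordinate
  have hE : ∑ a ∈ S, (1 - psiLoss (fun k => a k * z k)) ≤ 1 := by
    have hb : ∀ a ∈ S, 1 - psiLoss (fun k => a k * z k)
        ≤ if (∀ k, 0 < a k * z k) then (1:ℝ) else 0 := by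
      intro a _
      by_cases hc : ∀ k, 0 < a k * z k
      · rw [if_pos hc]; linarith [psi_nonneg (fun k => a k * z k)]
      · rw [if_neg hc]
        push_neg at hc
        obtain ⟨k, hk⟩ := hc
        have := psi_eq_one (v := fun k => a k * z k) ⟨k, hk⟩
        linarith [this]
    calc ∑ a ∈ S, (1 - psiLoss (fun k => a k * z k))
        ≤ ∑ a ∈ S, (if (∀ k, 0 < a k * z k) then (1:ℝ) else 0) := Finset.sum_le_sum hb
      _ = ((S.filter (fun a => ∀ k, 0 < a k * z k)).card : ℝ) := by rw [Finset.sum_boole]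
      _ ≤ 1 := by
          have hcard : (S.filter (fun a => ∀ k, 0 < a k * z k)).card ≤ 1 := by
            refine Finset.card_le_one.mpr fun a ha b hb => ?_
            obtain ⟨haS, ha2⟩ := Finset.mem_filter.mp ha
            obtain ⟨hbS, hb2⟩ := Finset.mem_filter.mp hb
            exact funext fun k => sign_eq_of_pos_mul ((mem_signVecs a).mp haS k)
              ((mem_signVecs b).mp hbS k) (ha2 k) (hb2 k)
          exact_mod_cast hcard
  -- key inequality 2
  have hEsum : ∑ a ∈ S.erase a₀, (1 - psiLoss (fun k => a k * z k))
      ≤ psiLoss (fun k => a₀ k * z k) := by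
    have hsplit2 : ∑ a ∈ S, (1 - psiLoss (fun k => a k * z k))
        = (1 - psiLoss (fun k => a₀ k * z k))
          + ∑ a ∈ S.erase a₀, (1 - psiLoss (fun k => a k * z k)) :=
      (Finset.add_sum_erase S _ ha₀).symm
    linarith [hE, hsplit2]
  have hkey2 : 0 ≤ w a₀ * psiLoss (fun k => a₀ k * z k)
      + ∑ a ∈ S.erase a₀, w a₀ * (psiLoss (fun k => a k * z k) - 1) := by
    have h1 : ∑ a ∈ S.erase a₀, w a₀ * (psiLoss (fun k => a k * z k) - 1)
        = w a₀ * ∑ a ∈ S.erase a₀, (psiLoss (fun k => a k * z k) - 1) :=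
      (Finset.mul_sum _ _ _).symm
    have h2 : ∑ a ∈ S.erase a₀, (psiLoss (fun k => a k * z k) - 1)
        = -∑ a ∈ S.erase a₀, (1 - psiLoss (fun k => a k * z k)) := by
      rw [← Finset.sum_neg_distrib]
      exact Finset.sum_congr rfl fun a _ => by ring
    have h3 : -psiLoss (fun k => a₀ k * z k)
        ≤ ∑ a ∈ S.erase a₀, (psiLoss (fun k => a k * z k) - 1) := by
      rw [h2]; linarith [hEsum]
    have h4 := mul_le_mul_of_nonneg_left h3 hpos.le
    have h5 : w a₀ * -psiLoss (fun k => a₀ k * z k)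
        = -(w a₀ * psiLoss (fun k => a₀ k * z k)) := by ring
    rw [h1]
    linarith [h4, h5.symm.le, h5.le]
  -- all the inequalities are equalities
  have heqsum : ∑ a ∈ S.erase a₀, w a₀ * (psiLoss (fun k => a k * z k) - 1)
      = ∑ a ∈ S.erase a₀, w a * (psiLoss (fun k => a k * z k) - 1) :=
    le_antisymm hE1 (by linarith [hkey1, hkey2])
  have hall := (Finset.sum_eq_sum_iff_of_le hterm).mp heqsum
  have hF1 : ∀ a ∈ S.erase a₀, psiLoss (fun k => a k * z k) = 1 := by
    intro a ha
    obtain ⟨hne, haS⟩ := Finset.mem_erase.mp ha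
    have h := hall a ha
    have hlt := hmax a haS hne
    have hz : (w a₀ - w a) * (psiLoss (fun k => a k * z k) - 1) = 0 := by
      linear_combination h
    rcases mul_eq_zero.mp hz with h' | h'
    · exact absurd h' (by linarith)
    · linarith [h']
  have hFa₀ : psiLoss (fun k => a₀ k * z k) = 0 := by
    have hzero : ∑ a ∈ S.erase a₀, w a * (psiLoss (fun k => a k * z k) - 1) = 0 :=
      Finset.sum_eq_zero fun a ha => by rw [hF1 a ha]; ring
    have h1 : w a₀ * psiLoss (fun k => a₀ k * z k) ≤ 0 := by linarith [hkey1, hzero]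
    have h0 := psi_nonneg (fun k => a₀ k * z k)
    nlinarith [hpos]
  have hconc1 : ∀ k, 1 ≤ a₀ k * z k := by
    intro k
    by_contra hc
    push_neg at hc
    have := psi_pos (v := fun k => a₀ k * z k) ⟨k, hc⟩
    linarith [hFa₀]
  refine ⟨hconc1, fun k => ?_⟩
  rcases ha₀' k with h | h
  · rw [h]
    have hz : (0:ℝ) < z k := by have := hconc1 k; rw [h] at this; linarith
    exact Real.sign_of_pos hz
  · rw [h]
    have hz : z k < 0 := by have := hconc1 k; rw [h] at this; linarith
    exact Real.sign_of_neg hz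
end

section
/- (Excess risk bound, integrated form of Theorem 2.) Let K ≥ 1 be an integer, (X, Σ_X, μ) a measure space, and W : X × {−1,1}^K → ℝ such that x ↦ W(x,a) is measurable and integrable for each a ∈ {−1,1}^K. Let f : X → ℝ^K be measurable with f(x)_k ≠ 0 for μ-a.e. x and every k, and let d_f(x) denote the unique a ∈ {−1,1}^K with a_k f(x)_k > 0 for all k. Define the 0-1 risk R(d_f) = ∫ Σ_{a ≠ d_f(x)} W(x,a) dμ(x), the ψ-risk R_ψ(f) = ∫ Σ_{a ∈ {−1,1}^K} W(x,a) ψ(a ⊙ f(x)) dμ(x), the Bayes risk R* = ∫ (Σ_{a} W(x,a) − max_{a} W(x,a)) dμ(x), and R_ψ* = ∫ (Σ_{a} W(x,a) − max(0, max_{a} W(x,a))) dμ(x). Assume μ-a.e. that max_{a} W(x,a) ≥ 0 and W(x, d_f(x)) ≥ 0, and that x ↦ Σ_a W(x,a) ψ(a ⊙ f(x)) is integrable. Then R* = R_ψ* and R(d_f) − R* ≤ R_ψ(f) − R_ψ*. -/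
lemma tgen_nonneg {K : ℕ} (s : ℝ) (z : Fin K → ℝ) : 0 ≤ Tgen s z :=
  (Finset.le_fold_max _).mpr (Or.inl le_rfl)

lemma tgen_eq_sup' {K : ℕ} (hK : 1 ≤ K) (s : ℝ) (z : Fin K → ℝ) :
    Tgen s z = max 0 ((Finset.univ : Finset (Fin K)).sup'
      (@Finset.univ_nonempty (Fin K) _ (Fin.pos_iff_nonempty.mp hK))
      (fun k => s - z k)) := by
  apply le_antisymm
  · exact (Finset.fold_max_le _).mpr ⟨le_max_left _ _,
      fun k _ => le_trans (Finset.le_sup' (fun k => s - z k) (Finset.mem_univ k)) (le_max_right _ _)⟩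
  · refine max_le ((Finset.le_fold_max _).mpr (Or.inl le_rfl)) ?_
    exact Finset.sup'_le _ _ fun k _ => (Finset.le_fold_max _).mpr
      (Or.inr ⟨k, Finset.mem_univ k, le_rfl⟩)

lemma psiLoss_eq_one {K : ℕ} (hK : 1 ≤ K) {z : Fin K → ℝ} (h : ∃ k, z k < 0) :
    psiLoss z = 1 := by
  have hne : (Finset.univ : Finset (Fin K)).Nonempty :=
    @Finset.univ_nonempty (Fin K) _ (Fin.pos_iff_nonempty.mp hK)
  set m := (Finset.univ : Finset (Fin K)).sup' hne (fun k => (0:ℝ) - z k) with hm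
  have hmpos : 0 < m := by
    obtain ⟨k, hk⟩ := h
    exact lt_of_lt_of_le (by linarith) (Finset.le_sup' _ (Finset.mem_univ k))
  have h1 : (Finset.univ : Finset (Fin K)).sup' hne (fun k => (1:ℝ) - z k) = 1 + m := by
    apply le_antisymm
    · exact Finset.sup'_le _ _ fun k _ => by
        have := Finset.le_sup' (f := fun k => (0:ℝ) - z k) (Finset.mem_univ k)
        linarith [this]
    · have : m ≤ (Finset.univ : Finset (Fin K)).sup' hne (fun k => (1:ℝ) - z k) - 1 :=
        Finset.sup'_le _ _ fun k _ => by
          have := Finset.le_sup' (f := fun k => (1:ℝ) - z k) (Finset.mem_univ k)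
          linarith [this]
      linarith
  unfold psiLoss
  rw [tgen_eq_sup' hK, tgen_eq_sup' hK]
  rw [show ((Finset.univ.sup' _ fun k => (1:ℝ) - z k) = 1 + m) from h1]
  rw [show ((Finset.univ.sup' _ fun k => (0:ℝ) - z k) = m) from rfl]
  rw [max_eq_right (by linarith), max_eq_right hmpos.le]
  ring

lemma psiLoss_nonneg_of_pos {K : ℕ} {z : Fin K → ℝ} (h : ∀ k, 0 < z k) :
    0 ≤ psiLoss z := by
  have h0 : Tgen 0 z = 0 :=
    le_antisymm ((Finset.fold_max_le _).mpr ⟨le_rfl, fun k _ => by linarith [h k]⟩)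
      (tgen_nonneg 0 z)
  unfold psiLoss
  rw [h0, sub_zero]
  exact tgen_nonneg 1 z

open MeasureTheory in
open scoped Classical in
theorem stmt15 (K : ℕ) (hK : 1 ≤ K) {X : Type*} [MeasurableSpace X]
    (μ : Measure X) (W : X → (Fin K → ℝ) → ℝ)
    (hWmeas : ∀ a ∈ signVecs K, Measurable fun x => W x a)
    (hWint : ∀ a ∈ signVecs K, Integrable (fun x => W x a) μ)
    (f : X → Fin K → ℝ) (hf : Measurable f)
    (hfz : ∀ᵐ x ∂μ, ∀ k, f x k ≠ 0)
    -- `df x` is the unique sign vector `a` with `a k * f x k > 0` for all `k`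
    (df : X → Fin K → ℝ)
    (hdf : df = fun x k => if 0 < f x k then (1 : ℝ) else -1)
    (hsup : ∀ᵐ x ∂μ, 0 ≤ (signVecs K).sup' (signVecs_nonempty K) (fun a => W x a))
    (hWdf : ∀ᵐ x ∂μ, 0 ≤ W x (df x))
    (hint : Integrable
      (fun x => ∑ a ∈ signVecs K, W x a * psiLoss (fun k => a k * f x k)) μ) :
    -- `R* = R_ψ*`
    (∫ x, ((∑ a ∈ signVecs K, W x a)
          - (signVecs K).sup' (signVecs_nonempty K) (fun a => W x a)) ∂μ)
      = (∫ x, ((∑ a ∈ signVecs K, W x a)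
          - max 0 ((signVecs K).sup' (signVecs_nonempty K) (fun a => W x a))) ∂μ)
    ∧
    -- `R(d_f) - R* ≤ R_ψ(f) - R_ψ*`
    (∫ x, (∑ a ∈ (signVecs K).filter (fun a => a ≠ df x), W x a) ∂μ)
        - (∫ x, ((∑ a ∈ signVecs K, W x a)
            - (signVecs K).sup' (signVecs_nonempty K) (fun a => W x a)) ∂μ)
      ≤ (∫ x, (∑ a ∈ signVecs K, W x a * psiLoss (fun k => a k * f x k)) ∂μ)
        - (∫ x, ((∑ a ∈ signVecs K, W x a)
            - max 0 ((signVecs K).sup' (signVecs_nonempty K) (fun a => W x a))) ∂μ) := by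
  subst hdf
  set df : X → Fin K → ℝ := fun x k => if 0 < f x k then (1 : ℝ) else -1 with hdf
  -- first conjunct
  have part1 : (∫ x, ((∑ a ∈ signVecs K, W x a)
          - (signVecs K).sup' (signVecs_nonempty K) (fun a => W x a)) ∂μ)
      = (∫ x, ((∑ a ∈ signVecs K, W x a)
          - max 0 ((signVecs K).sup' (signVecs_nonempty K) (fun a => W x a))) ∂μ) := by
    apply integral_congr_ae
    filter_upwards [hsup] with x h
    rw [max_eq_right h]
  refine ⟨part1, ?_⟩
  have hdmem : ∀ x, df x ∈ signVecs K := by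
    intro x
    rw [mem_signVecs]
    intro k
    by_cases h : 0 < f x k <;> simp [hdf, h]
  -- pointwise key inequality
  have key : ∀ x, (∀ k, f x k ≠ 0) → 0 ≤ W x (df x) →
      ∑ a ∈ (signVecs K).filter (fun a => a ≠ df x), W x a
        ≤ ∑ a ∈ signVecs K, W x a * psiLoss (fun k => a k * f x k) := by
    intro x hx hw
    have hfilter : (signVecs K).filter (fun a => a ≠ df x) = (signVecs K).erase (df x) := by
      ext a
      simp [Finset.mem_erase, and_comm]
    rw [hfilter]
    have h1 : ∀ a ∈ (signVecs K).erase (df x),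
        W x a * psiLoss (fun k => a k * f x k) = W x a := by
      intro a ha
      obtain ⟨hne, hmem⟩ := Finset.mem_erase.mp ha
      obtain ⟨k, hk⟩ : ∃ k, a k ≠ df x k := by
        by_contra h
        push_neg at h
        exact hne (funext h)
      have hneg : a k * f x k < 0 := by
        rcases lt_or_gt_of_ne (hx k) with hfk | hfk
        · have : df x k = -1 := by simp [hdf, not_lt_of_gt hfk, asymm hfk]
          rcases (mem_signVecs a).mp hmem k with h1 | h1
          · rw [h1]; linarith
          · exact absurd (h1.trans this.symm) hk
        · have : df x k = 1 := by simp [hdf, hfk]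
          rcases (mem_signVecs a).mp hmem k with h1 | h1
          · exact absurd (h1.trans this.symm) hk
          · rw [h1]; linarith
      rw [psiLoss_eq_one hK ⟨k, hneg⟩, mul_one]
    have hpos : ∀ k, 0 < df x k * f x k := by
      intro k
      rcases lt_or_gt_of_ne (hx k) with hfk | hfk
      · have : df x k = -1 := by simp [hdf, not_lt_of_gt hfk, asymm hfk]
        rw [this]; linarith
      · have : df x k = 1 := by simp [hdf, hfk]
        rw [this]; linarith
    calc ∑ a ∈ (signVecs K).erase (df x), W x a
        = ∑ a ∈ (signVecs K).erase (df x), W x a * psiLoss (fun k => a k * f x k) :=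
          (Finset.sum_congr rfl h1).symm
      _ ≤ (∑ a ∈ (signVecs K).erase (df x), W x a * psiLoss (fun k => a k * f x k))
            + W x (df x) * psiLoss (fun k => df x k * f x k) :=
          le_add_of_nonneg_right (mul_nonneg hw (psiLoss_nonneg_of_pos hpos))
      _ = ∑ a ∈ signVecs K, W x a * psiLoss (fun k => a k * f x k) :=
          Finset.sum_erase_add _ _ (hdmem x)
  -- measurability of df
  have hdf_meas : Measurable df := by
    apply measurable_pi_lambda
    intro k
    exact Measurable.ite
      (measurableSet_lt measurable_const ((measurable_pi_apply k).comp hf))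
      measurable_const measurable_const
  -- integrability of the 0-1 risk integrand
  have hLi : Integrable (fun x => ∑ a ∈ (signVecs K).filter (fun a => a ≠ df x), W x a) μ := by
    have heq : (fun x => ∑ a ∈ (signVecs K).filter (fun a => a ≠ df x), W x a)
        = fun x => ∑ a ∈ signVecs K,
            Set.indicator {x | a ≠ df x} (fun x => W x a) x := by
      funext x
      rw [Finset.sum_filter]
      refine Finset.sum_congr rfl fun a _ => ?_
      by_cases h : a ≠ df x <;> simp [Set.indicator, h]
    rw [heq]
    apply integrable_finset_sum
    intro a ha
    have hms : MeasurableSet {x | a ≠ df x} := by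
      have : {x | a ≠ df x} = (df ⁻¹' {a})ᶜ := by
        ext x
        simp [eq_comm]
      rw [this]
      exact (hdf_meas (measurableSet_singleton a)).compl
    exact (hWint a ha).indicator hms
  rw [part1]
  refine sub_le_sub_right ?_ _
  apply integral_mono_ae hLi hint
  filter_upwards [hfz, hWdf] with x hx hw using key x hx hw
end
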